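/- Let L → M → N be a short exact sequence of R-modules where N is S-h-divisible and L is S-torsion-free and S-h-divisible. Then M is S-h-divisible. -/
import Mathlib


/-- An `R`-module `C` is S-h-divisible if it is a quotient of a module over `S⁻¹R`
(equivalently, of a free `S⁻¹R`-module). -/
def IsSHDivisible (R : Type) [CommRing R] (S : Submonoid R)
    (C : Type) [AddCommGroup C] [Module R C] : Prop :=
  ∃ (ι : Type) (f : (ι →₀ Localization S) →ₗ[R] C), Function.Surjective f

section Aux

variable {R : Type} [CommRing R] (S : Submonoid R)

/-- If `s ∈ S`, scalar multiplication by `s` is bijective on any module over the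
localization. -/
lemma smul_bijective_of_locModule {C : Type} [AddCommGroup C] [Module R C]
    [Module (Localization S) C] [IsScalarTower R (Localization S) C] (s : S) :
    Function.Bijective (fun x : C => (s : R) • x) := by
  obtain ⟨u, hu⟩ := IsLocalization.map_units (Localization S) s
  have key : ∀ x : C, (s : R) • x = u • x := by
    intro x
    rw [← algebraMap_smul (Localization S) (s : R) x, ← hu, Units.smul_def]
  constructor
  · intro a b h
    simp only [key] at h
    simpa using congrArg (fun y => (u⁻¹ : (Localization S)ˣ) • y) h
  · intro x
    exact ⟨(u⁻¹ : (Localization S)ˣ) • x, by simp [key]⟩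

lemma smul_surjective_of_SHDiv {C : Type} [AddCommGroup C] [Module R C]
    (h : IsSHDivisible R S C) (s : S) :
    Function.Surjective (fun x : C => (s : R) • x) := by
  obtain ⟨ι, f, hf⟩ := h
  intro c
  obtain ⟨x, rfl⟩ := hf c
  obtain ⟨y, hy⟩ := (smul_bijective_of_locModule S (C := ι →₀ Localization S) s).2 x
  exact ⟨f y, by simpa [← hy] using (f.map_smul (s : R) y).symm⟩

/-- If every `s ∈ S` acts bijectively on `C`, then `C` is S-h-divisible. -/
lemma shdiv_of_smul_bijective {C : Type} [AddCommGroup C] [Module R C]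
    (h : ∀ s : S, Function.Bijective (fun x : C => (s : R) • x)) :
    IsSHDivisible R S C := by
  have hloc : IsLocalizedModule S (LinearMap.id : C →ₗ[R] C) := by
    constructor
    · intro s
      rw [Module.End.isUnit_iff]
      exact h s
    · intro y
      exact ⟨⟨y, 1⟩, by simp⟩
    · intro x₁ x₂ hx
      exact ⟨1, by simpa using hx⟩
  let e : LocalizedModule S C ≃ₗ[R] C := IsLocalizedModule.iso S (LinearMap.id : C →ₗ[R] C)
  refine ⟨LocalizedModule S C,
    (e.toLinearMap.comp ((Finsupp.linearCombination (Localization S)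
      (id : LocalizedModule S C → LocalizedModule S C)).restrictScalars R)), ?_⟩
  intro c
  refine ⟨Finsupp.single (e.symm c) 1, ?_⟩
  simp

end Aux

/-- If `0 → L → M → N → 0` is a short exact sequence with `N` S-h-divisible and `L`
S-torsion-free and S-h-divisible, then `M` is S-h-divisible. -/
theorem shdivisible_of_extension
    (R : Type) [CommRing R] (S : Submonoid R)
    (L M N : Type) [AddCommGroup L] [Module R L] [AddCommGroup M] [Module R M]
    [AddCommGroup N] [Module R N]
    (i : L →ₗ[R] M) (p : M →ₗ[R] N)
    (hi : Function.Injective i) (hp : Function.Surjective p)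
    (hexact : LinearMap.range i = LinearMap.ker p)
    (hLtf : ∀ (s : S) (x : L), (s : R) • x = 0 → x = 0)
    (hLdiv : IsSHDivisible R S L)
    (hNdiv : IsSHDivisible R S N) :
    IsSHDivisible R S M := by
  classical
  obtain ⟨ιN, g, hg⟩ := hNdiv
  set F := ιN →₀ Localization S with hF
  -- the pullback of p and g inside M × F
  set E : Submodule R (M × F) :=
    LinearMap.ker ((p.comp (LinearMap.fst R M F)) - (g.comp (LinearMap.snd R M F))) with hE
  have memE : ∀ x : M × F, x ∈ E ↔ p x.1 = g x.2 := by
    intro x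
    simp only [hE, LinearMap.mem_ker, LinearMap.sub_apply, LinearMap.comp_apply,
      LinearMap.fst_apply, LinearMap.snd_apply, sub_eq_zero]
  -- every s ∈ S acts bijectively on E
  have hbij : ∀ s : S, Function.Bijective (fun x : E => (s : R) • x) := by
    intro s
    have hFbij := smul_bijective_of_locModule S (C := F) s
    constructor
    · rintro ⟨⟨m, f⟩, hmf⟩ ⟨⟨m', f'⟩, hmf'⟩ h
      have h' : ((s : R) • (m, f) : M × F) = (s : R) • (m', f') := by
        have := congrArg (Subtype.val) h
        simpa using this
      rw [Prod.smul_mk, Prod.smul_mk, Prod.mk.injEq] at h'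
      obtain ⟨h1, h2⟩ := h'
      have hf : f = f' := hFbij.1 h2
      -- m - m' is in ker p
      have hker : m - m' ∈ LinearMap.ker p := by
        rw [LinearMap.mem_ker, map_sub, (memE _).1 hmf, (memE _).1 hmf', hf, sub_self]
      rw [← hexact] at hker
      obtain ⟨l, hl⟩ := hker
      have : i ((s : R) • l) = 0 := by
        rw [map_smul, hl, smul_sub, h1, sub_self]
      have hl0 : l = 0 := hLtf s l (hi (by simpa using this))
      have : m = m' := by
        rw [hl0, map_zero] at hl
        exact sub_eq_zero.mp hl.symm
      exact Subtype.ext (Prod.ext this hf)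
    · rintro ⟨⟨m, f⟩, hmf⟩
      obtain ⟨f', hf'⟩ := hFbij.2 f
      obtain ⟨m₀, hm₀⟩ := hp (g f')
      have hker : m - (s : R) • m₀ ∈ LinearMap.ker p := by
        rw [LinearMap.mem_ker, map_sub, map_smul, hm₀, (memE _).1 hmf, ← hf', map_smul, sub_self]
      rw [← hexact] at hker
      obtain ⟨l, hl⟩ := hker
      obtain ⟨l', hl'⟩ := smul_surjective_of_SHDiv S hLdiv s l
      change (s : R) • l' = l at hl'
      change (s : R) • f' = f at hf'
      refine ⟨⟨(m₀ + i l', f'), ?_⟩, ?_⟩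
      · rw [memE]
        have hilker : i l' ∈ LinearMap.ker p := hexact ▸ LinearMap.mem_range_self i l'
        simp only [map_add, hm₀, LinearMap.mem_ker.mp hilker, add_zero]
      · apply Subtype.ext
        apply Prod.ext
        · show (s : R) • (m₀ + i l') = m
          rw [smul_add, ← map_smul, hl', hl]
          abel
        · exact hf'
  obtain ⟨ι, φ, hφ⟩ := shdiv_of_smul_bijective S (C := ↥E) (fun s => by exact hbij s)
  -- project E onto M
  let π : E →ₗ[R] M := (LinearMap.fst R M F).comp E.subtype
  refine ⟨ι, π.comp φ, ?_⟩
  intro m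
  obtain ⟨f, hf⟩ := hg (p m)
  have hmem : (m, f) ∈ E := (memE _).2 hf.symm
  obtain ⟨x, hx⟩ := hφ ⟨(m, f), hmem⟩
  exact ⟨x, by simp [π, hx]⟩
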